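/- For every positive integer m and all complex numbers x, y, the following identity of formal power series in ℂ⟦t⟧ holds: Σ_{n≥0} (_mL_n(x,y|q)/[n]_q!) t^n = e_q(yt) · ε_q^m(-x t^m). -/

import Mathlib

/-- The q-analogue of a natural number: [n]_q = Σ_{k=1}^n q^{k-1}. -/
noncomputable def qnat (q : ℝ) (n : ℕ) : ℝ := ∑ k ∈ Finset.range n, q ^ k

/-- The q-factorial [n]_q! = Π_{k=1}^n [k]_q, with [0]_q! = 1. -/
noncomputable def qfact (q : ℝ) (n : ℕ) : ℝ := ∏ k ∈ Finset.range n, qnat q (k + 1)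

/-- The Gaussian q-binomial coefficient [n choose k]_q. -/
noncomputable def qbinom (q : ℝ) (n k : ℕ) : ℝ := qfact q n / (qfact q k * qfact q (n - k))

/-- JHC q-subtraction power (x ⊖_q y)^n. -/
noncomputable def qsubPow (q : ℝ) (x y : ℂ) (n : ℕ) : ℂ :=
  ∑ k ∈ Finset.range (n + 1),
    (qbinom q n k : ℂ) * (q : ℂ) ^ (k * (k - 1) / 2) * x ^ (n - k) * (-y) ^ k

/-- JHC q-addition power (x ⊕_q y)^n. -/
noncomputable def qaddPow (q : ℝ) (x y : ℂ) (n : ℕ) : ℂ :=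
  ∑ k ∈ Finset.range (n + 1),
    (qbinom q n k : ℂ) * (q : ℂ) ^ (k * (k - 1) / 2) * x ^ (n - k) * y ^ k

/-- The q-deformed 2D Laguerre polynomial _mL_n(x,y|q). -/
noncomputable def qLag (q : ℝ) (m : ℕ) (x y : ℂ) (n : ℕ) : ℂ :=
  (qfact q n : ℂ) * ∑ k ∈ Finset.range (n / m + 1),
    (q : ℂ) ^ (m * (k * (k - 1) / 2)) * x ^ k * y ^ (n - m * k) /
      ((qfact (q ^ m) k : ℂ) ^ 2 * (qfact q (n - m * k) : ℂ))

/-- The q-deformed Laguerre-Gould-Hopper polynomial _LH_n^{(m,s)}(x,y,z|q). -/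
noncomputable def qLGH (q : ℝ) (m s : ℕ) (x y z : ℂ) (n : ℕ) : ℂ :=
  (qfact q n : ℂ) * ∑ k ∈ Finset.range (n / s + 1),
    (q : ℂ) ^ (s * (k * (k - 1) / 2)) * z ^ k * qLag q m x y (n - s * k) /
      ((qfact (q ^ s) k : ℂ) * (qfact q (n - s * k) : ℂ))

/-- The two-variable q-Gould-Hopper kernel G_n^s(u,v). -/
noncomputable def qGH (q : ℝ) (s : ℕ) (u v : ℂ) (n : ℕ) : ℂ :=
  (qfact q n : ℂ) * ∑ k ∈ Finset.range (n / s + 1),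
    (q : ℂ) ^ (s * (k * (k - 1) / 2)) * u ^ (n - s * k) * v ^ k /
      ((qfact q (n - s * k) : ℂ) * (qfact (q ^ s) k : ℂ))

/-- The kernel G_n^s(ξ ⊖_q y, ζ ⊖_q z), with monomial powers replaced by
JHC q-subtraction powers. -/
noncomputable def qGHsub (q : ℝ) (s : ℕ) (ξ y ζ z : ℂ) (n : ℕ) : ℂ :=
  (qfact q n : ℂ) * ∑ k ∈ Finset.range (n / s + 1),
    (q : ℂ) ^ (s * (k * (k - 1) / 2)) * qsubPow q ξ y (n - s * k) * qsubPow q ζ z k /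
      ((qfact q (n - s * k) : ℂ) * (qfact (q ^ s) k : ℂ))

/-- The q-exponential series e_q(yt) = Σ_{n≥0} y^n t^n/[n]_q! in ℂ⟦t⟧. -/
noncomputable def eqSeries (q : ℝ) (y : ℂ) : PowerSeries ℂ :=
  PowerSeries.mk fun n => y ^ n / (qfact q n : ℂ)

/-- The (q,m)-deformed Bessel-Tricomi series
ε_q^m(-x t^m) = Σ_{k≥0} q^{m k(k-1)/2} x^k t^{mk}/([k]_{q^m}!)^2 in ℂ⟦t⟧. -/
noncomputable def besselTricomiSeries (q : ℝ) (m : ℕ) (x : ℂ) : PowerSeries ℂ :=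
  PowerSeries.mk fun n =>
    if m ∣ n then
      (q : ℂ) ^ (m * ((n / m) * (n / m - 1) / 2)) * x ^ (n / m) /
        (qfact (q ^ m) (n / m) : ℂ) ^ 2
    else 0

lemma qfact_pos (q : ℝ) (hq : 0 < q) (n : ℕ) : 0 < qfact q n := by
  unfold qfact
  apply Finset.prod_pos
  intro k _
  unfold qnat
  apply Finset.sum_pos (fun i _ => pow_pos hq i)
  simp

theorem generating_function_qLaguerre (q : ℝ) (hq0 : 0 < q) (hq1 : q < 1)
    (m : ℕ) (hm : 0 < m) (x y : ℂ) :
    (PowerSeries.mk fun n => qLag q m x y n / (qfact q n : ℂ)) =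
      eqSeries q y * besselTricomiSeries q m x := by
  ext n
  rw [PowerSeries.coeff_mk, mul_comm, PowerSeries.coeff_mul,
    Finset.Nat.sum_antidiagonal_eq_sum_range_succ
      (fun i j => (PowerSeries.coeff i) (besselTricomiSeries q m x)
        * (PowerSeries.coeff j) (eqSeries q y))]
  simp only [besselTricomiSeries, eqSeries, PowerSeries.coeff_mk, ite_mul, zero_mul]
  rw [← Finset.sum_filter]
  have hf : (qfact q n : ℂ) ≠ 0 := by
    exact_mod_cast (qfact_pos q hq0 n).ne'
  rw [qLag, mul_comm, mul_div_assoc, div_self hf, mul_one]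
  symm
  apply Finset.sum_nbij' (i := fun j => j / m) (j := fun k => m * k)
  · intro a ha
    simp only [Finset.mem_filter, Finset.mem_range] at ha
    simp only [Finset.mem_range]
    exact Nat.lt_succ_of_le (Nat.div_le_div_right (by omega))
  · intro a ha
    simp only [Finset.mem_range] at ha
    simp only [Finset.mem_filter, Finset.mem_range]
    have h3 : a * m ≤ n := (Nat.le_div_iff_mul_le hm).mp (by omega)
    rw [mul_comm]
    exact ⟨by omega, Dvd.intro_left a rfl⟩
  · intro a ha
    simp only [Finset.mem_filter, Finset.mem_range] at ha
    exact Nat.mul_div_cancel' ha.2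
  · intro a _
    exact Nat.mul_div_cancel_left a hm
  · intro a ha
    simp only [Finset.mem_filter, Finset.mem_range] at ha
    rw [Nat.mul_div_cancel' ha.2, div_mul_div_comm]
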